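/- Let n, m ≥ 5, let ℓ := min{n, m}, and let d := 2^ℓ if n = m and d := 2^{ℓ−1} if n ≠ m. Then the limit as x → 0⁺ of x^{ℓ−4} · p_{n,m}(A_x, B_x) / tr(A_x^n · B_x^m) exists and equals (n+m)/(d · binom(n+m, n)). -/

import Mathlib

set_option maxHeartbeats 1000000

open Matrix Asymptotics Filter

/-- The matrix `A_x`. -/
def Amat (x : ℝ) : Matrix (Fin 3) (Fin 3) ℝ :=
  !![1, 0, 0; 0, x, -x; 0, -x, x]

/-- The matrix `B_x`. -/
def Bmat (x : ℝ) : Matrix (Fin 3) (Fin 3) ℝ :=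
  !![x, -x, 0; -x, x, 0; 0, 0, 1]

/-- The (finite) set `𝒲_{n,m}` of words with exactly `n` letters `A` (`true`)
and `m` letters `B` (`false`). -/
def words (n m : ℕ) : Finset (List Bool) :=
  (List.replicate n true ++ List.replicate m false).permutations.toFinset

/-- `tr w(A_x, B_x)`: the trace of the word `w` evaluated at `(A_x, B_x)`. -/
noncomputable def wtr (x : ℝ) (w : List Bool) : ℝ :=
  ((w.map fun b => if b = true then Amat x else Bmat x).prod).trace

/-- The averaged word trace `p_{n,m}(A_x, B_x)`. -/
noncomputable def pnm (n m : ℕ) (x : ℝ) : ℝ :=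
  (1 / ((n + m).choose n)) * ∑ w ∈ words n m, wtr x w

def Tm : ℕ → ℕ → ℝ → Matrix (Fin 3) (Fin 3) ℝ
  | 0, 0, _ => 1
  | n+1, 0, x => Amat x * Tm n 0 x
  | 0, m+1, x => Bmat x * Tm 0 m x
  | n+1, m+1, x => Amat x * Tm n (m+1) x + Bmat x * Tm (n+1) m x

lemma Tm_zz (x : ℝ) : Tm 0 0 x = 1 := by simp only [Tm]
lemma Tm_s0 (n : ℕ) (x : ℝ) : Tm (n+1) 0 x = Amat x * Tm n 0 x := by simp only [Tm]
lemma Tm_0s (m : ℕ) (x : ℝ) : Tm 0 (m+1) x = Bmat x * Tm 0 m x := by simp only [Tm]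
lemma Tm_ss (n m : ℕ) (x : ℝ) :
    Tm (n+1) (m+1) x = Amat x * Tm n (m+1) x + Bmat x * Tm (n+1) m x := by
  simp only [Tm]

lemma add33 (a11 a12 a13 a21 a22 a23 a31 a32 a33 b11 b12 b13 b21 b22 b23 b31 b32 b33 : ℝ) :
    !![a11,a12,a13;a21,a22,a23;a31,a32,a33] + !![b11,b12,b13;b21,b22,b23;b31,b32,b33]
      = !![a11+b11,a12+b12,a13+b13;a21+b21,a22+b22,a23+b23;a31+b31,a32+b32,a33+b33] := by
  ext i j; fin_cases i <;> fin_cases j <;> simp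

lemma smul33 (r a11 a12 a13 a21 a22 a23 a31 a32 a33 : ℝ) :
    r • !![a11,a12,a13;a21,a22,a23;a31,a32,a33]
      = !![r*a11,r*a12,r*a13;r*a21,r*a22,r*a23;r*a31,r*a32,r*a33] := by
  ext i j; fin_cases i <;> fin_cases j <;> simp

lemma eq33 {a11 a12 a13 a21 a22 a23 a31 a32 a33 b11 b12 b13 b21 b22 b23 b31 b32 b33 : ℝ}
    (h11 : a11 = b11) (h12 : a12 = b12) (h13 : a13 = b13)
    (h21 : a21 = b21) (h22 : a22 = b22) (h23 : a23 = b23)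
    (h31 : a31 = b31) (h32 : a32 = b32) (h33 : a33 = b33) :
    !![a11,a12,a13;a21,a22,a23;a31,a32,a33] = !![b11,b12,b13;b21,b22,b23;b31,b32,b33] := by
  rw [h11, h12, h13, h21, h22, h23, h31, h32, h33]

noncomputable def FF0 (b x : ℝ) : Matrix (Fin 3) (Fin 3) ℝ :=
  !![0, 0, 0;
    0, 0, 0;
    0, 0, 1]

noncomputable def FF1 (b x : ℝ) : Matrix (Fin 3) (Fin 3) ℝ :=
  !![0, 0, x^2 + 2*x^3 + 4*x^4;
    0, 0, -x - x^2 - 2*x^3 - 4*x^4;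
    x^2 + 2*x^3 + 4*x^4, -x - x^2 - 2*x^3 - 4*x^4, (1 + b)*x]

noncomputable def FF2 (b x : ℝ) : Matrix (Fin 3) (Fin 3) ℝ :=
  !![x^4, -x^3 - 3*x^4, x^2 + (4 + b)*x^3 + (9 + 2*b)*x^4;
    -x^3 - 3*x^4, x^2 + 2*x^3 + 5*x^4, (-2 - 1*b)*x^2 + (-3 - 1*b)*x^3 + (-7 - 2*b)*x^4;
    x^2 + (4 + b)*x^3 + (9 + 2*b)*x^4, (-2 - 1*b)*x^2 + (-3 - 1*b)*x^3 + (-7 - 2*b)*x^4, (2 + (5/2)*b + (1/2)*b^2)*x^2 + b*x^3 + (-2 + 2*b)*x^4]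

noncomputable def FF3 (b x : ℝ) : Matrix (Fin 3) (Fin 3) ℝ :=
  !![2*x^4, -x^3 + (-6 - 1*b)*x^4, x^2 + (5 + b)*x^3 + (15 + (11/2)*b + (1/2)*b^2)*x^4;
    -x^3 + (-6 - 1*b)*x^4, (3 + b)*x^3 + (8 + 2*b)*x^4, (-5 + (-7/2)*b + (-1/2)*b^2)*x^3 + (-9 + (-11/2)*b + (-1/2)*b^2)*x^4;
    x^2 + (5 + b)*x^3 + (15 + (11/2)*b + (1/2)*b^2)*x^4, (-5 + (-7/2)*b + (-1/2)*b^2)*x^3 + (-9 + (-11/2)*b + (-1/2)*b^2)*x^4, (4 + (35/6)*b + 2*b^2 + (1/6)*b^3)*x^3 + (-1 + 4*b + b^2)*x^4]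

noncomputable def FF4 (b x : ℝ) : Matrix (Fin 3) (Fin 3) ℝ :=
  !![3*x^4, -x^3 + (-7 - 1*b)*x^4, x^2 + (6 + b)*x^3 + (21 + (13/2)*b + (1/2)*b^2)*x^4;
    -x^3 + (-7 - 1*b)*x^4, (9 + (9/2)*b + (1/2)*b^2)*x^4, -x^3 + (-15 + (-31/3)*b + (-5/2)*b^2 + (-1/6)*b^3)*x^4;
    x^2 + (6 + b)*x^3 + (21 + (13/2)*b + (1/2)*b^2)*x^4, -x^3 + (-15 + (-31/3)*b + (-5/2)*b^2 + (-1/6)*b^3)*x^4, (7 + (169/12)*b + (143/24)*b^2 + (11/12)*b^3 + (1/24)*b^4)*x^4]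

noncomputable def EE (a b x : ℝ) : Matrix (Fin 3) (Fin 3) ℝ :=
  !![(-1 + a)*x^4, -x^3 + (-3 - 1*b - 1*a)*x^4, x^2 + (2 + b + a)*x^3 + (3 + (5/2)*b + (1/2)*b^2 + (5/2)*a + a*b + (1/2)*a^2)*x^4;
    -x^3 + (-3 - 1*b - 1*a)*x^4, 2*x^4, -x^3 + (-3 - 1*b - 1*a)*x^4;
    x^2 + (2 + b + a)*x^3 + (3 + (5/2)*b + (1/2)*b^2 + (5/2)*a + a*b + (1/2)*a^2)*x^4, -x^3 + (-3 - 1*b - 1*a)*x^4, (-1 + b)*x^4]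

noncomputable def GG4 (a x : ℝ) : Matrix (Fin 3) (Fin 3) ℝ :=
  !![(7 + (169/12)*a + (143/24)*a^2 + (11/12)*a^3 + (1/24)*a^4)*x^4, -x^3 + (-15 + (-31/3)*a + (-5/2)*a^2 + (-1/6)*a^3)*x^4, x^2 + (6 + a)*x^3 + (21 + (13/2)*a + (1/2)*a^2)*x^4;
    -x^3 + (-15 + (-31/3)*a + (-5/2)*a^2 + (-1/6)*a^3)*x^4, (9 + (9/2)*a + (1/2)*a^2)*x^4, -x^3 + (-7 - 1*a)*x^4;
    x^2 + (6 + a)*x^3 + (21 + (13/2)*a + (1/2)*a^2)*x^4, -x^3 + (-7 - 1*a)*x^4, 3*x^4]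

def SwapM : Matrix (Fin 3) (Fin 3) ℝ := !![0,0,1;0,1,0;1,0,0]

lemma tm_0_0 (x : ℝ) : Tm 0 0 x = !![1,0,0;0,1,0;0,0,1] := by
  rw [Tm_zz]; exact Matrix.one_fin_three

lemma tm_0_1 (x : ℝ) : Tm 0 1 x =
    !![x, -x, 0;
    -x, x, 0;
    0, 0, 1] := by
  rw [Tm_0s, tm_0_0]; simp only [Bmat]; rw [Matrix.mul_fin_three]
  apply eq33 <;> ring

lemma tm_0_2 (x : ℝ) : Tm 0 2 x =
    !![2*x^2, -2*x^2, 0;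
    -2*x^2, 2*x^2, 0;
    0, 0, 1] := by
  rw [Tm_0s, tm_0_1]; simp only [Bmat]; rw [Matrix.mul_fin_three]
  apply eq33 <;> ring

lemma tm_0_3 (x : ℝ) : Tm 0 3 x =
    !![4*x^3, -4*x^3, 0;
    -4*x^3, 4*x^3, 0;
    0, 0, 1] := by
  rw [Tm_0s, tm_0_2]; simp only [Bmat]; rw [Matrix.mul_fin_three]
  apply eq33 <;> ring

lemma tm_0_4 (x : ℝ) : Tm 0 4 x =
    !![8*x^4, -8*x^4, 0;
    -8*x^4, 8*x^4, 0;
    0, 0, 1] := by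
  rw [Tm_0s, tm_0_3]; simp only [Bmat]; rw [Matrix.mul_fin_three]
  apply eq33 <;> ring

lemma tm_0_5 (x : ℝ) : Tm 0 5 x =
    !![16*x^5, -16*x^5, 0;
    -16*x^5, 16*x^5, 0;
    0, 0, 1] := by
  rw [Tm_0s, tm_0_4]; simp only [Bmat]; rw [Matrix.mul_fin_three]
  apply eq33 <;> ring

lemma tm_1_0 (x : ℝ) : Tm 1 0 x =
    !![1, 0, 0;
    0, x, -x;
    0, -x, x] := by
  rw [Tm_s0, tm_0_0]; simp only [Amat]; rw [Matrix.mul_fin_three]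
  apply eq33 <;> ring

lemma tm_1_1 (x : ℝ) : Tm 1 1 x =
    !![2*x, -x - x^2, x^2;
    -x - x^2, 2*x^2, -x - x^2;
    x^2, -x - x^2, 2*x] := by
  rw [Tm_ss, tm_0_1, tm_1_0]; simp only [Amat, Bmat]; rw [Matrix.mul_fin_three, Matrix.mul_fin_three, add33]
  apply eq33 <;> ring

lemma tm_1_2 (x : ℝ) : Tm 1 2 x =
    !![5*x^2 + x^3, -3*x^2 - 3*x^3, x^2 + 2*x^3;
    -3*x^2 - 3*x^3, x^2 + 5*x^3, -x - x^2 - 2*x^3;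
    x^2 + 2*x^3, -x - x^2 - 2*x^3, 3*x] := by
  rw [Tm_ss, tm_0_2, tm_1_1]; simp only [Amat, Bmat]; rw [Matrix.mul_fin_three, Matrix.mul_fin_three, add33]
  apply eq33 <;> ring

lemma tm_1_3 (x : ℝ) : Tm 1 3 x =
    !![12*x^3 + 4*x^4, -8*x^3 - 8*x^4, x^2 + 2*x^3 + 4*x^4;
    -8*x^3 - 8*x^4, 4*x^3 + 12*x^4, -x - x^2 - 2*x^3 - 4*x^4;
    x^2 + 2*x^3 + 4*x^4, -x - x^2 - 2*x^3 - 4*x^4, 4*x] := by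
  rw [Tm_ss, tm_0_3, tm_1_2]; simp only [Amat, Bmat]; rw [Matrix.mul_fin_three, Matrix.mul_fin_three, add33]
  apply eq33 <;> ring

lemma tm_1_4 (x : ℝ) : Tm 1 4 x =
    !![28*x^4 + 12*x^5, -20*x^4 - 20*x^5, x^2 + 2*x^3 + 4*x^4 + 8*x^5;
    -20*x^4 - 20*x^5, 12*x^4 + 28*x^5, -x - x^2 - 2*x^3 - 4*x^4 - 8*x^5;
    x^2 + 2*x^3 + 4*x^4 + 8*x^5, -x - x^2 - 2*x^3 - 4*x^4 - 8*x^5, 5*x] := by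
  rw [Tm_ss, tm_0_4, tm_1_3]; simp only [Amat, Bmat]; rw [Matrix.mul_fin_three, Matrix.mul_fin_three, add33]
  apply eq33 <;> ring

lemma tm_1_5 (x : ℝ) : Tm 1 5 x =
    !![64*x^5 + 32*x^6, -48*x^5 - 48*x^6, x^2 + 2*x^3 + 4*x^4 + 8*x^5 + 16*x^6;
    -48*x^5 - 48*x^6, 32*x^5 + 64*x^6, -x - x^2 - 2*x^3 - 4*x^4 - 8*x^5 - 16*x^6;
    x^2 + 2*x^3 + 4*x^4 + 8*x^5 + 16*x^6, -x - x^2 - 2*x^3 - 4*x^4 - 8*x^5 - 16*x^6, 6*x] := by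
  rw [Tm_ss, tm_0_5, tm_1_4]; simp only [Amat, Bmat]; rw [Matrix.mul_fin_three, Matrix.mul_fin_three, add33]
  apply eq33 <;> ring

lemma tm_2_0 (x : ℝ) : Tm 2 0 x =
    !![1, 0, 0;
    0, 2*x^2, -2*x^2;
    0, -2*x^2, 2*x^2] := by
  rw [Tm_s0, tm_1_0]; simp only [Amat]; rw [Matrix.mul_fin_three]
  apply eq33 <;> ring

lemma tm_2_1 (x : ℝ) : Tm 2 1 x =
    !![3*x, -x - x^2 - 2*x^3, x^2 + 2*x^3;
    -x - x^2 - 2*x^3, x^2 + 5*x^3, -3*x^2 - 3*x^3;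
    x^2 + 2*x^3, -3*x^2 - 3*x^3, 5*x^2 + x^3] := by
  rw [Tm_ss, tm_1_1, tm_2_0]; simp only [Amat, Bmat]; rw [Matrix.mul_fin_three, Matrix.mul_fin_three, add33]
  apply eq33 <;> ring

lemma tm_2_2 (x : ℝ) : Tm 2 2 x =
    !![9*x^2 + 2*x^3 + 2*x^4, -4*x^2 - 5*x^3 - 7*x^4, x^2 + 6*x^3 + 5*x^4;
    -4*x^2 - 5*x^3 - 7*x^4, 2*x^2 + 4*x^3 + 14*x^4, -4*x^2 - 5*x^3 - 7*x^4;
    x^2 + 6*x^3 + 5*x^4, -4*x^2 - 5*x^3 - 7*x^4, 9*x^2 + 2*x^3 + 2*x^4] := by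
  rw [Tm_ss, tm_1_2, tm_2_1]; simp only [Amat, Bmat]; rw [Matrix.mul_fin_three, Matrix.mul_fin_three, add33]
  apply eq33 <;> ring

lemma tm_2_3 (x : ℝ) : Tm 2 3 x =
    !![25*x^3 + 11*x^4 + 9*x^5, -14*x^3 - 17*x^4 - 21*x^5, x^2 + 7*x^3 + 15*x^4 + 12*x^5;
    -14*x^3 - 17*x^4 - 21*x^5, x^2 + 7*x^3 + 15*x^4 + 37*x^5, -5*x^2 - 6*x^3 - 13*x^4 - 16*x^5;
    x^2 + 7*x^3 + 15*x^4 + 12*x^5, -5*x^2 - 6*x^3 - 13*x^4 - 16*x^5, 14*x^2 + 3*x^3 + 4*x^4 + 4*x^5] := by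
  rw [Tm_ss, tm_1_3, tm_2_2]; simp only [Amat, Bmat]; rw [Matrix.mul_fin_three, Matrix.mul_fin_three, add33]
  apply eq33 <;> ring

lemma tm_2_4 (x : ℝ) : Tm 2 4 x =
    !![67*x^4 + 40*x^5 + 30*x^6, -x^3 - 41*x^4 - 52*x^5 - 58*x^6, x^2 + 8*x^3 + 17*x^4 + 36*x^5 + 28*x^6;
    -x^3 - 41*x^4 - 52*x^5 - 58*x^6, x^2 + 2*x^3 + 23*x^4 + 48*x^5 + 94*x^6, -6*x^2 - 7*x^3 - 15*x^4 - 32*x^5 - 36*x^6;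
    x^2 + 8*x^3 + 17*x^4 + 36*x^5 + 28*x^6, -6*x^2 - 7*x^3 - 15*x^4 - 32*x^5 - 36*x^6, 20*x^2 + 4*x^3 + 6*x^4 + 8*x^5 + 8*x^6] := by
  rw [Tm_ss, tm_1_4, tm_2_3]; simp only [Amat, Bmat]; rw [Matrix.mul_fin_three, Matrix.mul_fin_three, add33]
  apply eq33 <;> ring

lemma tm_2_5 (x : ℝ) : Tm 2 5 x =
    !![x^4 + 172*x^5 + 124*x^6 + 88*x^7, -x^3 - 3*x^4 - 112*x^5 - 148*x^6 - 152*x^7, x^2 + 9*x^3 + 19*x^4 + 40*x^5 + 84*x^6 + 64*x^7;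
    -x^3 - 3*x^4 - 112*x^5 - 148*x^6 - 152*x^7, x^2 + 2*x^3 + 5*x^4 + 68*x^5 + 140*x^6 + 232*x^7, -7*x^2 - 8*x^3 - 17*x^4 - 36*x^5 - 76*x^6 - 80*x^7;
    x^2 + 9*x^3 + 19*x^4 + 40*x^5 + 84*x^6 + 64*x^7, -7*x^2 - 8*x^3 - 17*x^4 - 36*x^5 - 76*x^6 - 80*x^7, 27*x^2 + 5*x^3 + 8*x^4 + 12*x^5 + 16*x^6 + 16*x^7] := by
  rw [Tm_ss, tm_1_5, tm_2_4]; simp only [Amat, Bmat]; rw [Matrix.mul_fin_three, Matrix.mul_fin_three, add33]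
  apply eq33 <;> ring

lemma tm_3_0 (x : ℝ) : Tm 3 0 x =
    !![1, 0, 0;
    0, 4*x^3, -4*x^3;
    0, -4*x^3, 4*x^3] := by
  rw [Tm_s0, tm_2_0]; simp only [Amat]; rw [Matrix.mul_fin_three]
  apply eq33 <;> ring

lemma tm_3_1 (x : ℝ) : Tm 3 1 x =
    !![4*x, -x - x^2 - 2*x^3 - 4*x^4, x^2 + 2*x^3 + 4*x^4;
    -x - x^2 - 2*x^3 - 4*x^4, 4*x^3 + 12*x^4, -8*x^3 - 8*x^4;
    x^2 + 2*x^3 + 4*x^4, -8*x^3 - 8*x^4, 12*x^3 + 4*x^4] := by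
  rw [Tm_ss, tm_2_1, tm_3_0]; simp only [Amat, Bmat]; rw [Matrix.mul_fin_three, Matrix.mul_fin_three, add33]
  apply eq33 <;> ring

lemma tm_3_2 (x : ℝ) : Tm 3 2 x =
    !![14*x^2 + 3*x^3 + 4*x^4 + 4*x^5, -5*x^2 - 6*x^3 - 13*x^4 - 16*x^5, x^2 + 7*x^3 + 15*x^4 + 12*x^5;
    -5*x^2 - 6*x^3 - 13*x^4 - 16*x^5, x^2 + 7*x^3 + 15*x^4 + 37*x^5, -14*x^3 - 17*x^4 - 21*x^5;
    x^2 + 7*x^3 + 15*x^4 + 12*x^5, -14*x^3 - 17*x^4 - 21*x^5, 25*x^3 + 11*x^4 + 9*x^5] := by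
  rw [Tm_ss, tm_2_2, tm_3_1]; simp only [Amat, Bmat]; rw [Matrix.mul_fin_three, Matrix.mul_fin_three, add33]
  apply eq33 <;> ring

lemma tm_3_3 (x : ℝ) : Tm 3 3 x =
    !![44*x^3 + 20*x^4 + 26*x^5 + 20*x^6, -20*x^3 - 30*x^4 - 49*x^5 - 53*x^6, x^2 + 8*x^3 + 36*x^4 + 44*x^5 + 33*x^6;
    -20*x^3 - 30*x^4 - 49*x^5 - 53*x^6, 12*x^3 + 26*x^4 + 56*x^5 + 106*x^6, -20*x^3 - 30*x^4 - 49*x^5 - 53*x^6;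
    x^2 + 8*x^3 + 36*x^4 + 44*x^5 + 33*x^6, -20*x^3 - 30*x^4 - 49*x^5 - 53*x^6, 44*x^3 + 20*x^4 + 26*x^5 + 20*x^6] := by
  rw [Tm_ss, tm_2_3, tm_3_2]; simp only [Amat, Bmat]; rw [Matrix.mul_fin_three, Matrix.mul_fin_three, add33]
  apply eq33 <;> ring

lemma tm_3_4 (x : ℝ) : Tm 3 4 x =
    !![131*x^4 + 90*x^5 + 105*x^6 + 73*x^7, -x^3 - 73*x^4 - 108*x^5 - 163*x^6 - 159*x^7, x^2 + 9*x^3 + 45*x^4 + 102*x^5 + 121*x^6 + 86*x^7;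
    -x^3 - 73*x^4 - 108*x^5 - 163*x^6 - 159*x^7, 7*x^3 + 41*x^4 + 94*x^5 + 185*x^6 + 289*x^7, -27*x^3 - 39*x^4 - 87*x^5 - 133*x^6 - 130*x^7;
    x^2 + 9*x^3 + 45*x^4 + 102*x^5 + 121*x^6 + 86*x^7, -27*x^3 - 39*x^4 - 87*x^5 - 133*x^6 - 130*x^7, 70*x^3 + 31*x^4 + 47*x^5 + 60*x^6 + 44*x^7] := by
  rw [Tm_ss, tm_2_4, tm_3_3]; simp only [Amat, Bmat]; rw [Matrix.mul_fin_three, Matrix.mul_fin_three, add33]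
  apply eq33 <;> ring

lemma tm_3_5 (x : ℝ) : Tm 3 5 x =
    !![2*x^4 + 376*x^5 + 322*x^6 + 356*x^7 + 232*x^8, -x^3 - 11*x^4 - 226*x^5 - 350*x^6 - 500*x^7 - 448*x^8, x^2 + 10*x^3 + 55*x^4 + 124*x^5 + 273*x^6 + 318*x^7 + 216*x^8;
    -x^3 - 11*x^4 - 226*x^5 - 350*x^6 - 500*x^7 - 448*x^8, 8*x^3 + 18*x^4 + 136*x^5 + 306*x^6 + 564*x^7 + 760*x^8, -35*x^3 - 49*x^4 - 109*x^5 - 237*x^6 - 346*x^7 - 312*x^8;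
    x^2 + 10*x^3 + 55*x^4 + 124*x^5 + 273*x^6 + 318*x^7 + 216*x^8, -35*x^3 - 49*x^4 - 109*x^5 - 237*x^6 - 346*x^7 - 312*x^8, 104*x^3 + 44*x^4 + 72*x^5 + 108*x^6 + 136*x^7 + 96*x^8] := by
  rw [Tm_ss, tm_2_5, tm_3_4]; simp only [Amat, Bmat]; rw [Matrix.mul_fin_three, Matrix.mul_fin_three, add33]
  apply eq33 <;> ring

lemma tm_4_0 (x : ℝ) : Tm 4 0 x =
    !![1, 0, 0;
    0, 8*x^4, -8*x^4;
    0, -8*x^4, 8*x^4] := by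
  rw [Tm_s0, tm_3_0]; simp only [Amat]; rw [Matrix.mul_fin_three]
  apply eq33 <;> ring

lemma tm_4_1 (x : ℝ) : Tm 4 1 x =
    !![5*x, -x - x^2 - 2*x^3 - 4*x^4 - 8*x^5, x^2 + 2*x^3 + 4*x^4 + 8*x^5;
    -x - x^2 - 2*x^3 - 4*x^4 - 8*x^5, 12*x^4 + 28*x^5, -20*x^4 - 20*x^5;
    x^2 + 2*x^3 + 4*x^4 + 8*x^5, -20*x^4 - 20*x^5, 28*x^4 + 12*x^5] := by
  rw [Tm_ss, tm_3_1, tm_4_0]; simp only [Amat, Bmat]; rw [Matrix.mul_fin_three, Matrix.mul_fin_three, add33]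
  apply eq33 <;> ring

lemma tm_4_2 (x : ℝ) : Tm 4 2 x =
    !![20*x^2 + 4*x^3 + 6*x^4 + 8*x^5 + 8*x^6, -6*x^2 - 7*x^3 - 15*x^4 - 32*x^5 - 36*x^6, x^2 + 8*x^3 + 17*x^4 + 36*x^5 + 28*x^6;
    -6*x^2 - 7*x^3 - 15*x^4 - 32*x^5 - 36*x^6, x^2 + 2*x^3 + 23*x^4 + 48*x^5 + 94*x^6, -x^3 - 41*x^4 - 52*x^5 - 58*x^6;
    x^2 + 8*x^3 + 17*x^4 + 36*x^5 + 28*x^6, -x^3 - 41*x^4 - 52*x^5 - 58*x^6, 67*x^4 + 40*x^5 + 30*x^6] := by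
  rw [Tm_ss, tm_3_2, tm_4_1]; simp only [Amat, Bmat]; rw [Matrix.mul_fin_three, Matrix.mul_fin_three, add33]
  apply eq33 <;> ring

lemma tm_4_3 (x : ℝ) : Tm 4 3 x =
    !![70*x^3 + 31*x^4 + 47*x^5 + 60*x^6 + 44*x^7, -27*x^3 - 39*x^4 - 87*x^5 - 133*x^6 - 130*x^7, x^2 + 9*x^3 + 45*x^4 + 102*x^5 + 121*x^6 + 86*x^7;
    -27*x^3 - 39*x^4 - 87*x^5 - 133*x^6 - 130*x^7, 7*x^3 + 41*x^4 + 94*x^5 + 185*x^6 + 289*x^7, -x^3 - 73*x^4 - 108*x^5 - 163*x^6 - 159*x^7;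
    x^2 + 9*x^3 + 45*x^4 + 102*x^5 + 121*x^6 + 86*x^7, -x^3 - 73*x^4 - 108*x^5 - 163*x^6 - 159*x^7, 131*x^4 + 90*x^5 + 105*x^6 + 73*x^7] := by
  rw [Tm_ss, tm_3_3, tm_4_2]; simp only [Amat, Bmat]; rw [Matrix.mul_fin_three, Matrix.mul_fin_three, add33]
  apply eq33 <;> ring

lemma tm_4_4 (x : ℝ) : Tm 4 4 x =
    !![228*x^4 + 160*x^5 + 239*x^6 + 266*x^7 + 174*x^8, -x^3 - 107*x^4 - 188*x^5 - 344*x^6 - 477*x^7 - 419*x^8, x^2 + 10*x^3 + 55*x^4 + 220*x^5 + 331*x^6 + 370*x^7 + 245*x^8;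
    -x^3 - 107*x^4 - 188*x^5 - 344*x^6 - 477*x^7 - 419*x^8, 68*x^4 + 160*x^5 + 362*x^6 + 636*x^7 + 838*x^8, -x^3 - 107*x^4 - 188*x^5 - 344*x^6 - 477*x^7 - 419*x^8;
    x^2 + 10*x^3 + 55*x^4 + 220*x^5 + 331*x^6 + 370*x^7 + 245*x^8, -x^3 - 107*x^4 - 188*x^5 - 344*x^6 - 477*x^7 - 419*x^8, 228*x^4 + 160*x^5 + 239*x^6 + 266*x^7 + 174*x^8] := by
  rw [Tm_ss, tm_3_4, tm_4_3]; simp only [Amat, Bmat]; rw [Matrix.mul_fin_three, Matrix.mul_fin_three, add33]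
  apply eq33 <;> ring

lemma tm_4_5 (x : ℝ) : Tm 4 5 x =
    !![3*x^4 + 711*x^5 + 670*x^6 + 939*x^7 + 975*x^8 + 593*x^9, -x^3 - 12*x^4 - 401*x^5 - 698*x^6 - 1206*x^7 - 1561*x^8 - 1257*x^9, x^2 + 11*x^3 + 66*x^4 + 286*x^5 + 681*x^6 + 993*x^7 + 1063*x^8 + 664*x^9;
    -x^3 - 12*x^4 - 401*x^5 - 698*x^6 - 1206*x^7 - 1561*x^8 - 1257*x^9, 44*x^4 + 242*x^5 + 593*x^6 + 1249*x^7 + 2023*x^8 + 2329*x^9, -x^3 - 150*x^4 - 255*x^5 - 589*x^6 - 1020*x^7 - 1329*x^8 - 1072*x^9;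
    x^2 + 11*x^3 + 66*x^4 + 286*x^5 + 681*x^6 + 993*x^7 + 1063*x^8 + 664*x^9, -x^3 - 150*x^4 - 255*x^5 - 589*x^6 - 1020*x^7 - 1329*x^8 - 1072*x^9, 367*x^4 + 253*x^5 + 420*x^6 + 611*x^7 + 656*x^8 + 408*x^9] := by
  rw [Tm_ss, tm_3_5, tm_4_4]; simp only [Amat, Bmat]; rw [Matrix.mul_fin_three, Matrix.mul_fin_three, add33]
  apply eq33 <;> ring

lemma baseF0 (x : ℝ) : Tm 0 5 x = FF0 5 x + x^5 • (
    !![16, -16, 0;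
    -16, 16, 0;
    0, 0, 0]) := by
  rw [tm_0_5]; simp only [FF0]; rw [smul33, add33]
  apply eq33 <;> ring

lemma baseF1 (x : ℝ) : Tm 1 5 x = FF1 5 x + x^5 • (
    !![64 + 32*x, -48 - 48*x, 8 + 16*x;
    -48 - 48*x, 32 + 64*x, -8 - 16*x;
    8 + 16*x, -8 - 16*x, 0]) := by
  rw [tm_1_5]; simp only [FF1]; rw [smul33, add33]
  apply eq33 <;> ring

lemma baseF2 (x : ℝ) : Tm 2 5 x = FF2 5 x + x^5 • (
    !![172 + 124*x + 88*x^2, -112 - 148*x - 152*x^2, 40 + 84*x + 64*x^2;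
    -112 - 148*x - 152*x^2, 68 + 140*x + 232*x^2, -36 - 76*x - 80*x^2;
    40 + 84*x + 64*x^2, -36 - 76*x - 80*x^2, 12 + 16*x + 16*x^2]) := by
  rw [tm_2_5]; simp only [FF2]; rw [smul33, add33]
  apply eq33 <;> ring

lemma baseF3 (x : ℝ) : Tm 3 5 x = FF3 5 x + x^5 • (
    !![376 + 322*x + 356*x^2 + 232*x^3, -226 - 350*x - 500*x^2 - 448*x^3, 124 + 273*x + 318*x^2 + 216*x^3;
    -226 - 350*x - 500*x^2 - 448*x^3, 136 + 306*x + 564*x^2 + 760*x^3, -109 - 237*x - 346*x^2 - 312*x^3;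
    124 + 273*x + 318*x^2 + 216*x^3, -109 - 237*x - 346*x^2 - 312*x^3, 72 + 108*x + 136*x^2 + 96*x^3]) := by
  rw [tm_3_5]; simp only [FF3]; rw [smul33, add33]
  apply eq33 <;> ring

lemma baseF4 (x : ℝ) : Tm 4 5 x = FF4 5 x + x^5 • (
    !![711 + 670*x + 939*x^2 + 975*x^3 + 593*x^4, -401 - 698*x - 1206*x^2 - 1561*x^3 - 1257*x^4, 286 + 681*x + 993*x^2 + 1063*x^3 + 664*x^4;
    -401 - 698*x - 1206*x^2 - 1561*x^3 - 1257*x^4, 242 + 593*x + 1249*x^2 + 2023*x^3 + 2329*x^4, -255 - 589*x - 1020*x^2 - 1329*x^3 - 1072*x^4;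
    286 + 681*x + 993*x^2 + 1063*x^3 + 664*x^4, -255 - 589*x - 1020*x^2 - 1329*x^3 - 1072*x^4, 253 + 420*x + 611*x^2 + 656*x^3 + 408*x^4]) := by
  rw [tm_4_5]; simp only [FF4]; rw [smul33, add33]
  apply eq33 <;> ring

lemma idF0 (b c x : ℝ) : Bmat x * FF0 b x = FF0 c x := by
  simp only [Bmat, FF0]
  rw [Matrix.mul_fin_three]
  apply eq33 <;> ring

lemma idF1 (b x : ℝ) : Amat x * FF0 (b+1) x + Bmat x * FF1 b x
    = FF1 (b+1) x + x^5 • (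
    !![0, 0, 8;
    0, 0, -8;
    0, 0, 0]) := by
  simp only [Amat, Bmat, FF0, FF1]; rw [Matrix.mul_fin_three, Matrix.mul_fin_three, smul33, add33, add33]
  apply eq33 <;> ring

lemma idF2 (b x : ℝ) : Amat x * FF1 (b+1) x + Bmat x * FF2 b x
    = FF2 (b+1) x + x^5 • (
    !![4, -8, (16 + 4*b);
    -8, 12, (-20 - 4*b);
    4, -4, 4]) := by
  simp only [Amat, Bmat, FF1, FF2]; rw [Matrix.mul_fin_three, Matrix.mul_fin_three, smul33, add33, add33]
  apply eq33 <;> ring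

lemma idF3 (b x : ℝ) : Amat x * FF2 (b+1) x + Bmat x * FF3 b x
    = FF3 (b+1) x + x^5 • (
    !![(8 + b), (-14 - 3*b), (24 + 11*b + b^2);
    (-22 - 3*b), (28 + 5*b), (-33 - 15*b - 1*b^2);
    (14 + 2*b), (-14 - 2*b), (9 + 4*b)]) := by
  simp only [Amat, Bmat, FF2, FF3]; rw [Matrix.mul_fin_three, Matrix.mul_fin_three, smul33, add33, add33]
  apply eq33 <;> ring

lemma idF4 (b x : ℝ) : Amat x * FF3 (b+1) x + Bmat x * FF4 b x
    = FF4 (b+1) x + x^5 • (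
    !![(10 + b), (-16 + (-11/2)*b + (-1/2)*b^2), (36 + (101/6)*b + 3*b^2 + (1/6)*b^3);
    (-38 + (-17/2)*b + (-1/2)*b^2), (41 + 14*b + b^2), (-55 + (-88/3)*b + (-9/2)*b^2 + (-1/6)*b^3);
    (28 + (15/2)*b + (1/2)*b^2), (-25 + (-17/2)*b + (-1/2)*b^2), (19 + (25/2)*b + (3/2)*b^2)]) := by
  simp only [Amat, Bmat, FF3, FF4]; rw [Matrix.mul_fin_three, Matrix.mul_fin_three, smul33, add33, add33]
  apply eq33 <;> ring

lemma idE (a b x : ℝ) : Amat x * EE a (b+1) x + Bmat x * EE (a+1) b x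
    = EE (a+1) (b+1) x + x^5 • (
    !![(4 + b + 2*a), (-6 - 1*b - 1*a), (10 + (9/2)*b + (1/2)*b^2 + (9/2)*a + a*b + (1/2)*a^2);
    (-14 + (-11/2)*b + (-1/2)*b^2 + (-13/2)*a - 1*a*b + (-1/2)*a^2), (12 + 2*b + 2*a), (-14 + (-13/2)*b + (-1/2)*b^2 + (-11/2)*a - 1*a*b + (-1/2)*a^2);
    (10 + (9/2)*b + (1/2)*b^2 + (9/2)*a + a*b + (1/2)*a^2), (-6 - 1*b - 1*a), (4 + 2*b + a)]) := by
  simp only [Amat, Bmat, EE]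
  rw [Matrix.mul_fin_three, Matrix.mul_fin_three, smul33, add33, add33]
  apply eq33 <;> ring

lemma idEdgeN (b x : ℝ) : Amat x * FF4 (b+1) x + Bmat x * EE 5 b x
    = EE 5 (b+1) x + x^5 • (
    !![(12 + b), (-10 - 1*b), (36 + (17/2)*b + (1/2)*b^2);
    (-48 + (-19/2)*b + (-1/2)*b^2), (52 + (67/3)*b + (7/2)*b^2 + (1/6)*b^3), (-92 + (-213/4)*b + (-299/24)*b^2 + (-5/4)*b^3 + (-1/24)*b^4);
    (36 + (17/2)*b + (1/2)*b^2), (-42 + (-64/3)*b + (-7/2)*b^2 + (-1/6)*b^3), (56 + (179/4)*b + (287/24)*b^2 + (5/4)*b^3 + (1/24)*b^4)]) := by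
  simp only [Amat, Bmat, FF4, EE]
  rw [Matrix.mul_fin_three, Matrix.mul_fin_three, smul33, add33, add33]
  apply eq33 <;> ring

lemma idEdgeM (a x : ℝ) : Amat x * EE a 5 x + Bmat x * GG4 (a+1) x
    = EE (a+1) 5 x + x^5 • (
    !![(56 + (179/4)*a + (287/24)*a^2 + (5/4)*a^3 + (1/24)*a^4), (-42 + (-64/3)*a + (-7/2)*a^2 + (-1/6)*a^3), (36 + (17/2)*a + (1/2)*a^2);
    (-92 + (-213/4)*a + (-299/24)*a^2 + (-5/4)*a^3 + (-1/24)*a^4), (52 + (67/3)*a + (7/2)*a^2 + (1/6)*a^3), (-48 + (-19/2)*a + (-1/2)*a^2);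
    (36 + (17/2)*a + (1/2)*a^2), (-10 - 1*a), (12 + a)]) := by
  simp only [Amat, Bmat, EE, GG4]
  rw [Matrix.mul_fin_three, Matrix.mul_fin_three, smul33, add33, add33]
  apply eq33 <;> ring

lemma idCorner (x : ℝ) : Amat x * FF4 5 x + Bmat x * GG4 5 x
    = EE 5 5 x + x^5 • (
    !![517, -194, 78;
    -595, 388, -595;
    78, -194, 517]) := by
  simp only [Amat, Bmat, FF4, GG4, EE]
  rw [Matrix.mul_fin_three, Matrix.mul_fin_three, smul33, add33, add33]
  apply eq33 <;> ring

lemma swapA (x : ℝ) : SwapM * Amat x * SwapM = Bmat x := by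
  simp only [SwapM, Amat, Bmat]
  rw [Matrix.mul_fin_three, Matrix.mul_fin_three]
  apply eq33 <;> ring

lemma swapB (x : ℝ) : SwapM * Bmat x * SwapM = Amat x := by
  simp only [SwapM, Amat, Bmat]
  rw [Matrix.mul_fin_three, Matrix.mul_fin_three]
  apply eq33 <;> ring

lemma swapI : SwapM * SwapM = 1 := by
  simp only [SwapM]
  rw [Matrix.mul_fin_three, Matrix.one_fin_three]
  apply eq33 <;> ring

lemma swapG4 (a x : ℝ) : SwapM * FF4 a x * SwapM = GG4 a x := by
  simp only [SwapM, FF4, GG4]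
  rw [Matrix.mul_fin_three, Matrix.mul_fin_three]
  apply eq33 <;> ring

lemma traceEE (a b x : ℝ) : (EE a b x).trace = (a+b)*x^4 := by
  simp [EE, Matrix.trace_fin_three]; ring

-- ===== big-O infrastructure =====
def MB (f g : ℝ → Matrix (Fin 3) (Fin 3) ℝ) : Prop :=
  ∀ i j, (fun x => f x i j - g x i j) =O[nhdsWithin (0:ℝ) (Set.Ioi 0)] fun x : ℝ => x^5

lemma isBigO_x5_of_cont (q : ℝ → ℝ) (hq : Continuous q) :
    (fun x : ℝ => x^5 * q x) =O[nhdsWithin (0:ℝ) (Set.Ioi 0)] fun x : ℝ => x^5 := by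
  have h1 : (fun x : ℝ => q x) =O[nhdsWithin (0:ℝ) (Set.Ioi 0)] (fun _ => (1:ℝ)) :=
    ((hq.tendsto 0).mono_left nhdsWithin_le_nhds).isBigO_one ℝ
  simpa using (isBigO_refl (fun x : ℝ => x^5) _).mul h1

lemma MB_of_eq {f g Q : ℝ → Matrix (Fin 3) (Fin 3) ℝ}
    (h : ∀ x, f x = g x + x^5 • Q x)
    (hQ : ∀ i j, Continuous fun x => Q x i j) : MB f g := by
  intro i j
  have he : (fun x => f x i j - g x i j) = fun x => x^5 * Q x i j := by
    funext x; rw [h x]; simp [Matrix.add_apply, Matrix.smul_apply]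
  rw [he]; exact isBigO_x5_of_cont _ (hQ i j)

lemma MB_of_eq' {f g : ℝ → Matrix (Fin 3) (Fin 3) ℝ} (h : ∀ x, f x = g x) : MB f g := by
  intro i j
  have he : (fun x => f x i j - g x i j) = fun _ => (0:ℝ) := by
    funext x; rw [h x]; ring
  rw [he]; exact isBigO_zero _ _

lemma MB_trans {f g h : ℝ → Matrix (Fin 3) (Fin 3) ℝ} (h1 : MB f g) (h2 : MB g h) : MB f h := by
  intro i j
  have he : (fun x => f x i j - h x i j)
      = fun x => (f x i j - g x i j) + (g x i j - h x i j) := by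
    funext x; ring
  rw [he]; exact (h1 i j).add (h2 i j)

lemma MB_mul_left (h : ℝ → Matrix (Fin 3) (Fin 3) ℝ) (hc : ∀ i j, Continuous fun x => h x i j)
    {f g : ℝ → Matrix (Fin 3) (Fin 3) ℝ} (hf : MB f g) :
    MB (fun x => h x * f x) (fun x => h x * g x) := by
  intro i j
  have he : (fun x => (h x * f x) i j - (h x * g x) i j)
      = fun x => ∑ k : Fin 3, h x i k * (f x k j - g x k j) := by
    funext x; simp [Matrix.mul_apply, mul_sub, Finset.sum_sub_distrib]
  rw [he]
  refine IsBigO.fun_sum fun k _ => ?_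
  have h1 : (fun x : ℝ => h x i k) =O[nhdsWithin (0:ℝ) (Set.Ioi 0)] (fun _ => (1:ℝ)) :=
    (((hc i k).tendsto 0).mono_left nhdsWithin_le_nhds).isBigO_one ℝ
  simpa using h1.mul (hf k j)

lemma MB_add {f f' g g' : ℝ → Matrix (Fin 3) (Fin 3) ℝ} (h1 : MB f f') (h2 : MB g g') :
    MB (fun x => f x + g x) (fun x => f' x + g' x) := by
  intro i j
  have he : (fun x => (f x + g x) i j - (f' x + g' x) i j)
      = fun x => (f x i j - f' x i j) + (g x i j - g' x i j) := by
    funext x; simp [Matrix.add_apply]; ring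
  rw [he]; exact (h1 i j).add (h2 i j)

lemma MB_conj (P R : Matrix (Fin 3) (Fin 3) ℝ) {f g : ℝ → Matrix (Fin 3) (Fin 3) ℝ} (hf : MB f g) :
    MB (fun x => P * f x * R) (fun x => P * g x * R) := by
  intro i j
  have he : (fun x => (P * f x * R) i j - (P * g x * R) i j)
      = fun x => ∑ k : Fin 3, ∑ l : Fin 3, (P i l * R k j) * (f x l k - g x l k) := by
    funext x
    simp only [Matrix.mul_apply, Fin.sum_univ_three]
    ring
  rw [he]
  refine IsBigO.fun_sum fun k _ => IsBigO.fun_sum fun l _ => ?_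
  exact (hf l k).const_mul_left _

lemma contA : ∀ i j, Continuous fun x => Amat x i j := by
  intro i j; fin_cases i <;> fin_cases j <;> simp [Amat] <;> fun_prop

lemma contB : ∀ i j, Continuous fun x => Bmat x i j := by
  intro i j; fin_cases i <;> fin_cases j <;> simp [Bmat] <;> fun_prop

lemma MB_stepAB {f f' g g' : ℝ → Matrix (Fin 3) (Fin 3) ℝ} (h1 : MB f f') (h2 : MB g g') :
    MB (fun x => Amat x * f x + Bmat x * g x) (fun x => Amat x * f' x + Bmat x * g' x) :=
  MB_add (MB_mul_left _ contA h1) (MB_mul_left _ contB h2)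

-- ===== family congruences =====
lemma cast5 : ((5:ℕ):ℝ) = 5 := by norm_num
lemma castS (m : ℕ) : ((m+1:ℕ):ℝ) = (m:ℝ)+1 := by push_cast; ring

lemma fam0 : ∀ m : ℕ, 5 ≤ m → MB (Tm 0 m) (fun x => FF0 (m:ℝ) x) := by
  intro m hm
  induction m, hm using Nat.le_induction with
  | base => rw [cast5]; exact MB_of_eq baseF0 (by intro i j; fin_cases i <;> fin_cases j <;> simp <;> fun_prop)
  | succ m hm ih =>
    have hT : Tm 0 (m+1) = fun x => Bmat x * Tm 0 m x := funext fun x => Tm_0s m x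
    rw [hT]
    exact MB_trans (MB_mul_left _ contB ih) (MB_of_eq' fun x => idF0 (m:ℝ) _ x)

lemma fam1 : ∀ m : ℕ, 5 ≤ m → MB (Tm 1 m) (fun x => FF1 (m:ℝ) x) := by
  intro m hm
  induction m, hm using Nat.le_induction with
  | base => rw [cast5]; exact MB_of_eq baseF1 (by intro i j; fin_cases i <;> fin_cases j <;> simp <;> fun_prop)
  | succ m hm ih =>
    have hT : Tm 1 (m+1) = fun x => Amat x * Tm 0 (m+1) x + Bmat x * Tm 1 m x :=
      funext fun x => Tm_ss 0 m x
    have h0 := fam0 (m+1) (by omega)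
    rw [castS m] at h0 ⊢
    rw [hT]
    exact MB_trans (MB_stepAB h0 ih) (MB_of_eq (idF1 (m:ℝ)) (by intro i j; fin_cases i <;> fin_cases j <;> simp <;> fun_prop))

lemma fam2 : ∀ m : ℕ, 5 ≤ m → MB (Tm 2 m) (fun x => FF2 (m:ℝ) x) := by
  intro m hm
  induction m, hm using Nat.le_induction with
  | base => rw [cast5]; exact MB_of_eq baseF2 (by intro i j; fin_cases i <;> fin_cases j <;> simp <;> fun_prop)
  | succ m hm ih =>
    have hT : Tm 2 (m+1) = fun x => Amat x * Tm 1 (m+1) x + Bmat x * Tm 2 m x :=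
      funext fun x => Tm_ss 1 m x
    have h0 := fam1 (m+1) (by omega)
    rw [castS m] at h0 ⊢
    rw [hT]
    exact MB_trans (MB_stepAB h0 ih) (MB_of_eq (idF2 (m:ℝ)) (by intro i j; fin_cases i <;> fin_cases j <;> simp <;> fun_prop))

lemma fam3 : ∀ m : ℕ, 5 ≤ m → MB (Tm 3 m) (fun x => FF3 (m:ℝ) x) := by
  intro m hm
  induction m, hm using Nat.le_induction with
  | base => rw [cast5]; exact MB_of_eq baseF3 (by intro i j; fin_cases i <;> fin_cases j <;> simp <;> fun_prop)
  | succ m hm ih =>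
    have hT : Tm 3 (m+1) = fun x => Amat x * Tm 2 (m+1) x + Bmat x * Tm 3 m x :=
      funext fun x => Tm_ss 2 m x
    have h0 := fam2 (m+1) (by omega)
    rw [castS m] at h0 ⊢
    rw [hT]
    exact MB_trans (MB_stepAB h0 ih) (MB_of_eq (idF3 (m:ℝ)) (by intro i j; fin_cases i <;> fin_cases j <;> simp <;> fun_prop))

lemma fam4 : ∀ m : ℕ, 5 ≤ m → MB (Tm 4 m) (fun x => FF4 (m:ℝ) x) := by
  intro m hm
  induction m, hm using Nat.le_induction with
  | base => rw [cast5]; exact MB_of_eq baseF4 (by intro i j; fin_cases i <;> fin_cases j <;> simp <;> fun_prop)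
  | succ m hm ih =>
    have hT : Tm 4 (m+1) = fun x => Amat x * Tm 3 (m+1) x + Bmat x * Tm 4 m x :=
      funext fun x => Tm_ss 3 m x
    have h0 := fam3 (m+1) (by omega)
    rw [castS m] at h0 ⊢
    rw [hT]
    exact MB_trans (MB_stepAB h0 ih) (MB_of_eq (idF4 (m:ℝ)) (by intro i j; fin_cases i <;> fin_cases j <;> simp <;> fun_prop))

-- ===== symmetry =====
lemma conjS_mul (M N : Matrix (Fin 3) (Fin 3) ℝ) :
    SwapM * (M * N) * SwapM = (SwapM * M * SwapM) * (SwapM * N * SwapM) := by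
  have h : (SwapM * M * SwapM) * (SwapM * N * SwapM) = SwapM * M * (SwapM * SwapM) * N * SwapM := by
    noncomm_ring
  rw [h, swapI, mul_one]; noncomm_ring

lemma conjS_add (M N : Matrix (Fin 3) (Fin 3) ℝ) :
    SwapM * (M + N) * SwapM = SwapM * M * SwapM + SwapM * N * SwapM := by
  noncomm_ring

lemma tm_symm : ∀ (k n m : ℕ), n + m = k → ∀ x, Tm n m x = SwapM * Tm m n x * SwapM := by
  intro k
  induction k with
  | zero =>
    intro n m h x
    obtain ⟨rfl, rfl⟩ : n = 0 ∧ m = 0 := by omega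
    rw [Tm_zz, mul_one, swapI]
  | succ k ih =>
    intro n m h x
    match n, m with
    | 0, 0 => rw [Tm_zz, mul_one, swapI]
    | 0, m+1 =>
      rw [Tm_0s, Tm_s0, conjS_mul, swapA, ih 0 m (by omega) x]
    | n+1, 0 =>
      rw [Tm_s0, Tm_0s, conjS_mul, swapB, ih n 0 (by omega) x]
    | n+1, m+1 =>
      rw [Tm_ss, Tm_ss, conjS_add, conjS_mul, conjS_mul, swapA, swapB,
        ← ih (n+1) m (by omega) x, ← ih n (m+1) (by omega) x]
      exact (add_comm _ _)

lemma tm_symm' (n m : ℕ) (x : ℝ) : Tm n m x = SwapM * Tm m n x * SwapM :=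
  tm_symm (n+m) n m rfl x

lemma fam4R (n : ℕ) (hn : 5 ≤ n) : MB (Tm n 4) (fun x => GG4 (n:ℝ) x) := by
  have h1 : Tm n 4 = fun x => SwapM * Tm 4 n x * SwapM := funext fun x => tm_symm' n 4 x
  rw [h1]
  exact MB_trans (MB_conj SwapM SwapM (fam4 n hn)) (MB_of_eq' fun x => swapG4 (n:ℝ) x)

-- ===== interior =====
lemma intE : ∀ n, 5 ≤ n → ∀ m, 5 ≤ m → MB (Tm n m) (fun x => EE (n:ℝ) (m:ℝ) x) := by
  intro n hn
  induction n, hn using Nat.le_induction with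
  | base =>
    intro m hm
    induction m, hm using Nat.le_induction with
    | base =>
      rw [cast5]
      have hT : Tm 5 5 = fun x => Amat x * Tm 4 5 x + Bmat x * Tm 5 4 x :=
        funext fun x => Tm_ss 4 4 x
      rw [hT]
      have h1 := fam4 5 le_rfl
      have h2 := fam4R 5 le_rfl
      rw [cast5] at h1 h2
      exact MB_trans (MB_stepAB h1 h2) (MB_of_eq (fun x => idCorner x) (by intro i j; fin_cases i <;> fin_cases j <;> simp <;> fun_prop))
    | succ m hm ihm =>
      have hT : Tm 5 (m+1) = fun x => Amat x * Tm 4 (m+1) x + Bmat x * Tm 5 m x :=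
        funext fun x => Tm_ss 4 m x
      have h1 := fam4 (m+1) (by omega)
      rw [castS m] at h1 ⊢
      rw [cast5] at ihm ⊢
      rw [hT]
      exact MB_trans (MB_stepAB h1 ihm) (MB_of_eq (idEdgeN (m:ℝ)) (by intro i j; fin_cases i <;> fin_cases j <;> simp <;> fun_prop))
  | succ n hn ihn =>
    intro m hm
    induction m, hm using Nat.le_induction with
    | base =>
      have hT : Tm (n+1) 5 = fun x => Amat x * Tm n 5 x + Bmat x * Tm (n+1) 4 x :=
        funext fun x => Tm_ss n 4 x
      have h1 := ihn 5 le_rfl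
      have h2 := fam4R (n+1) (by omega)
      rw [castS n] at h2 ⊢
      rw [cast5] at h1 ⊢
      rw [hT]
      exact MB_trans (MB_stepAB h1 h2) (MB_of_eq (idEdgeM (n:ℝ)) (by intro i j; fin_cases i <;> fin_cases j <;> simp <;> fun_prop))
    | succ m hm ihm =>
      have hT : Tm (n+1) (m+1) = fun x => Amat x * Tm n (m+1) x + Bmat x * Tm (n+1) m x :=
        funext fun x => Tm_ss n m x
      have h1 := ihn (m+1) (by omega)
      rw [castS m] at h1 ⊢
      rw [castS n] at ihm ⊢
      rw [hT]
      exact MB_trans (MB_stepAB h1 ihm) (MB_of_eq (idE (n:ℝ) (m:ℝ)) (by intro i j; fin_cases i <;> fin_cases j <;> simp <;> fun_prop))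

-- ===== trace asymptotics =====
lemma trace_O (n m : ℕ) (hn : 5 ≤ n) (hm : 5 ≤ m) :
    (fun x : ℝ => (Tm n m x).trace - (n+m : ℝ)*x^4)
      =O[nhdsWithin (0:ℝ) (Set.Ioi 0)] fun x : ℝ => x^5 := by
  have h := intE n hn m hm
  have he : (fun x : ℝ => (Tm n m x).trace - (n+m:ℝ)*x^4)
      = fun x => ∑ i : Fin 3, (Tm n m x i i - EE (n:ℝ) (m:ℝ) x i i) := by
    funext x
    have h2 := traceEE (n:ℝ) (m:ℝ) x
    simp only [Matrix.trace, Matrix.diag] at h2 ⊢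
    rw [Finset.sum_sub_distrib, h2]
  rw [he]
  exact IsBigO.fun_sum fun i _ => h i i

-- ===== words combinatorics =====
lemma mem_words {n m : ℕ} {w : List Bool} :
    w ∈ words n m ↔ w.count true = n ∧ w.count false = m := by
  rw [words, List.mem_toFinset, List.mem_permutations,
    List.perm_replicate_append_replicate (by decide : true ≠ false)]
  constructor
  · rintro ⟨h1, h2, _⟩; exact ⟨h1, h2⟩
  · rintro ⟨h1, h2⟩; exact ⟨h1, h2, fun b _ => by cases b <;> simp⟩

lemma words_zero_right (n : ℕ) : words n 0 = {List.replicate n true} := by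
  ext w
  rw [words, List.mem_toFinset, List.mem_permutations]
  simp [List.perm_replicate]

lemma words_zero_left (m : ℕ) : words 0 m = {List.replicate m false} := by
  ext w
  rw [words, List.mem_toFinset, List.mem_permutations]
  simp [List.perm_replicate]

lemma words_split (n m : ℕ) :
    words (n+1) (m+1)
      = ((words n (m+1)).image (List.cons true)) ∪ ((words (n+1) m).image (List.cons false)) := by
  ext w
  simp only [mem_words, Finset.mem_union, Finset.mem_image]
  constructor
  · rintro ⟨h1, h2⟩
    match w with
    | [] => simp at h1
    | true :: t =>
      left
      refine ⟨t, ⟨?_, ?_⟩, rfl⟩ <;> simp [List.count_cons] at h1 h2 <;> omega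
    | false :: t =>
      right
      refine ⟨t, ⟨?_, ?_⟩, rfl⟩ <;> simp [List.count_cons] at h1 h2 <;> omega
  · rintro (⟨t, ⟨h1, h2⟩, rfl⟩ | ⟨t, ⟨h1, h2⟩, rfl⟩) <;>
      constructor <;> simp [List.count_cons, h1, h2]

lemma sum_words_eq_Tm (x : ℝ) :
    ∀ (k n m : ℕ), n + m = k →
      ∑ w ∈ words n m, (w.map fun b => if b = true then Amat x else Bmat x).prod = Tm n m x := by
  intro k
  induction k with
  | zero =>
    intro n m h
    obtain ⟨rfl, rfl⟩ : n = 0 ∧ m = 0 := by omega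
    rw [words_zero_right, Tm_zz]
    simp
  | succ k ih =>
    intro n m h
    match n, m with
    | 0, 0 => rw [words_zero_right, Tm_zz]; simp
    | n+1, 0 =>
      rw [words_zero_right, Tm_s0, ← ih n 0 (by omega), words_zero_right]
      simp [List.replicate_succ]
    | 0, m+1 =>
      rw [words_zero_left, Tm_0s, ← ih 0 m (by omega), words_zero_left]
      simp [List.replicate_succ]
    | n+1, m+1 =>
      rw [words_split, Finset.sum_union, Finset.sum_image, Finset.sum_image]
      · rw [Tm_ss, ← ih n (m+1) (by omega), ← ih (n+1) m (by omega),
          Finset.mul_sum, Finset.mul_sum]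
        congr 1 <;> refine Finset.sum_congr rfl fun w _ => ?_ <;> simp
      · intro a _ b _ hab; simpa using hab
      · intro a _ b _ hab; simpa using hab
      · rw [Finset.disjoint_left]
        rintro w hw hw'
        simp only [Finset.mem_image] at hw hw'
        obtain ⟨t, _, rfl⟩ := hw
        obtain ⟨s, _, h2⟩ := hw'
        simp at h2

lemma sum_wtr (n m : ℕ) (x : ℝ) : ∑ w ∈ words n m, wtr x w = (Tm n m x).trace := by
  rw [← sum_words_eq_Tm x (n+m) n m rfl, Matrix.trace_sum]
  rfl


-- ===== powers of A and B =====
lemma Apow (n : ℕ) (x : ℝ) :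
    Amat x ^ (n+1) = !![1,0,0;0,2^n*x^(n+1),-(2^n*x^(n+1));0,-(2^n*x^(n+1)),2^n*x^(n+1)] := by
  induction n with
  | zero => rw [pow_one, Amat]; apply eq33 <;> ring
  | succ n ih =>
    rw [pow_succ, ih]
    simp only [Amat]
    rw [Matrix.mul_fin_three]
    apply eq33 <;> ring

lemma Bpow (m : ℕ) (x : ℝ) :
    Bmat x ^ (m+1) = !![2^m*x^(m+1),-(2^m*x^(m+1)),0;-(2^m*x^(m+1)),2^m*x^(m+1),0;0,0,1] := by
  induction m with
  | zero => rw [pow_one, Bmat]; apply eq33 <;> ring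
  | succ m ih =>
    rw [pow_succ, ih]
    simp only [Bmat]
    rw [Matrix.mul_fin_three]
    apply eq33 <;> ring

lemma traceAB (n m : ℕ) (x : ℝ) :
    (Amat x ^ (n+1) * Bmat x ^ (m+1)).trace
      = 2^m*x^(m+1) + 2^n*x^(n+1) + (2^n*x^(n+1)) * (2^m*x^(m+1)) := by
  rw [Apow, Bpow, Matrix.mul_fin_three, Matrix.trace_fin_three_of]
  ring

-- ===== final limit =====
theorem stmt_11 (n m : ℕ) (hn : 5 ≤ n) (hm : 5 ≤ m) (ℓ d : ℕ)
    (hℓ : ℓ = min n m) (hd : d = if n = m then 2 ^ ℓ else 2 ^ (ℓ - 1)) :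
    Filter.Tendsto
      (fun x : ℝ => x ^ (ℓ - 4) * pnm n m x / (Amat x ^ n * Bmat x ^ m).trace)
      (nhdsWithin 0 (Set.Ioi 0))
      (nhds ((n + m : ℝ) / (d * ((n + m).choose n)))) := by
  have hl5 : 5 ≤ ℓ := by omega
  set F := nhdsWithin (0:ℝ) (Set.Ioi 0) with hF
  set C : ℝ := (((n + m).choose n : ℕ):ℝ) with hC
  set ρ : ℝ → ℝ := fun x => (Tm n m x).trace - (n+m : ℝ)*x^4 with hρdef
  have hρ : ρ =O[F] fun x : ℝ => x^5 := trace_O n m hn hm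
  set u : ℝ → ℝ := fun x => ρ x / x^4 with hu
  have hu0 : Filter.Tendsto u F (nhds 0) := by
    have h1 : u =O[F] fun x : ℝ => x^5 * (x^4)⁻¹ := by
      have := hρ.mul (isBigO_refl (fun x : ℝ => (x^4)⁻¹) F)
      simpa [hu, div_eq_mul_inv] using this
    have h2 : u =O[F] fun x : ℝ => x := by
      refine h1.trans (Asymptotics.IsBigO.of_bound 1 ?_)
      filter_upwards [self_mem_nhdsWithin] with x hx
      have hx0 : (x:ℝ) ≠ 0 := ne_of_gt hx
      rw [show x^5 * (x^4)⁻¹ = x by field_simp]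
      simp
    exact h2.trans_tendsto (Filter.tendsto_id.mono_left nhdsWithin_le_nhds)
  have hd0 : (0:ℝ) < (d:ℝ) := by
    have : 0 < d := by rcases hd with rfl; split <;> positivity
    exact_mod_cast this
  have hC0 : (0:ℝ) < C := by
    have : 0 < (n+m).choose n := Nat.choose_pos (by omega)
    rw [hC]; exact_mod_cast this
  obtain ⟨e, he0, hetr⟩ : ∃ e : ℝ → ℝ, Filter.Tendsto e F (nhds 0) ∧
      ∀ x ∈ Set.Ioi (0:ℝ), (Amat x ^ n * Bmat x ^ m).trace = x^ℓ * ((d:ℝ) + e x) := by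
    obtain ⟨n', rfl⟩ : ∃ n', n = n' + 1 := ⟨n-1, by omega⟩
    obtain ⟨m', rfl⟩ : ∃ m', m = m' + 1 := ⟨m-1, by omega⟩
    rcases lt_trichotomy n' m' with hlt | heq | hgt
    · -- n < m, ℓ = n'+1, d = 2^n'
      have hℓn : ℓ = n' + 1 := by omega
      have hdn : (d:ℝ) = 2^n' := by
        rcases hd with rfl
        rw [if_neg (by omega)]
        have h9 : ℓ - 1 = n' := by omega
        rw [h9]; push_cast; ring
      refine ⟨fun x => 2^m' * x^(m'-n') + 2^(n'+m') * x^(m'+1), ?_, ?_⟩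
      · have hz : (0:ℝ) = 2^m' * 0^(m'-n') + 2^(n'+m') * 0^(m'+1) := by
          rw [zero_pow (by omega), zero_pow (by omega)]; ring
        rw [hz]
        refine Filter.Tendsto.mono_left ?_ nhdsWithin_le_nhds
        exact ((continuous_const.mul (continuous_pow _)).add
          (continuous_const.mul (continuous_pow _))).tendsto 0
      · intro x hx
        have e1 : x^(n'+1) * x^(m'-n') = x^(m'+1) := by rw [← pow_add]; congr 1; omega
        have e2 : (2:ℝ)^(n'+m') = 2^n' * 2^m' := by rw [pow_add]
        rw [traceAB, hℓn, hdn, e2]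
        linear_combination (-((2:ℝ)^m')) * e1
    · -- n = m : ℓ = n'+1, d = 2^(n'+1)
      have hℓn : ℓ = n' + 1 := by omega
      have hdn : (d:ℝ) = 2^(n'+1) := by
        rcases hd with rfl
        rw [if_pos (by omega), hℓn]; push_cast; ring
      subst heq
      refine ⟨fun x => 2^(n'+n') * x^(n'+1), ?_, ?_⟩
      · have hz : (0:ℝ) = 2^(n'+n') * 0^(n'+1) := by rw [zero_pow (by omega)]; ring
        rw [hz]
        refine Filter.Tendsto.mono_left ?_ nhdsWithin_le_nhds
        exact (continuous_const.mul (continuous_pow _)).tendsto 0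
      · intro x hx
        have e2 : (2:ℝ)^(n'+n') = 2^n' * 2^n' := by rw [pow_add]
        rw [traceAB, hℓn, hdn, e2]
        ring
    · -- n > m : ℓ = m'+1, d = 2^m'
      have hℓn : ℓ = m' + 1 := by omega
      have hdn : (d:ℝ) = 2^m' := by
        rcases hd with rfl
        rw [if_neg (by omega)]
        have h9 : ℓ - 1 = m' := by omega
        rw [h9]; push_cast; ring
      refine ⟨fun x => 2^n' * x^(n'-m') + 2^(n'+m') * x^(n'+1), ?_, ?_⟩
      · have hz : (0:ℝ) = 2^n' * 0^(n'-m') + 2^(n'+m') * 0^(n'+1) := by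
          rw [zero_pow (by omega), zero_pow (by omega)]; ring
        rw [hz]
        refine Filter.Tendsto.mono_left ?_ nhdsWithin_le_nhds
        exact ((continuous_const.mul (continuous_pow _)).add
          (continuous_const.mul (continuous_pow _))).tendsto 0
      · intro x hx
        have e1 : x^(m'+1) * x^(n'-m') = x^(n'+1) := by rw [← pow_add]; congr 1; omega
        have e2 : (2:ℝ)^(n'+m') = 2^n' * 2^m' := by rw [pow_add]
        rw [traceAB, hℓn, hdn, e2]
        linear_combination (-((2:ℝ)^n')) * e1
  have hkey : ∀ x ∈ Set.Ioi (0:ℝ),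
      x ^ (ℓ - 4) * pnm n m x / (Amat x ^ n * Bmat x ^ m).trace
        = ((n + m : ℝ) + u x) / (C * ((d:ℝ) + e x)) := by
    intro x hx
    have hx0 : (x:ℝ) ≠ 0 := ne_of_gt hx
    have hpnm : pnm n m x = (1 / C) * ((n+m:ℝ)*x^4 + ρ x) := by
      rw [pnm, sum_wtr, hρdef, hC]; push_cast; ring
    have hnum : x ^ (ℓ - 4) * pnm n m x = x^ℓ * ((1 / C) * ((n+m:ℝ) + u x)) := by
      rw [hpnm]
      have h4 : x^4 * u x = ρ x := by rw [hu]; field_simp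
      have hpow : x ^ (ℓ - 4) * x^4 = x^ℓ := by rw [← pow_add]; congr 1; omega
      calc x ^ (ℓ - 4) * ((1 / C) * ((n+m:ℝ)*x^4 + ρ x))
          = (x ^ (ℓ-4) * x^4) * ((1 / C) * ((n+m:ℝ) + u x)) := by rw [← h4]; ring
        _ = _ := by rw [hpow]
    rw [hnum, hetr x hx, mul_div_mul_left _ _ (pow_ne_zero ℓ hx0), one_div_mul_eq_div,
      div_div]
  have hlim : Filter.Tendsto (fun x => ((n + m : ℝ) + u x) / (C * ((d:ℝ) + e x))) F
      (nhds (((n+m:ℝ) + 0) / (C * ((d:ℝ) + 0)))) := by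
    exact (tendsto_const_nhds.add hu0).div
      (tendsto_const_nhds.mul (tendsto_const_nhds.add he0)) (by positivity)
  have heq : (((n+m:ℝ) + 0) / (C * ((d:ℝ) + 0))) = ((n + m : ℝ) / (d * ((n + m).choose n))) := by
    rw [hC]; push_cast; ring
  rw [heq] at hlim
  refine hlim.congr' ?_
  filter_upwards [self_mem_nhdsWithin] with x hx
  exact (hkey x hx).symm
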